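/- Let n ≥ 1 and β > n+1, and set K_β = (1/8)·((4β−5)^2 + n−1)/((β−1)(β−n−1)). The function Φ_p(t) = t^{2/p} on (0,∞), for 1 < p < 2, satisfies Φ_p^{(4)}(t) Φ_p″(t) ≥ K_β (Φ_p^{(3)}(t))^2 for all t > 0 if and only if 1 < p ≤ p_β := 1 + 4(β−1)(β−n−1)/(4(β−1)^2 + 4(3n−2)(β−1) + n). -/

import Mathlib

set_option maxHeartbeats 1000000


theorem phi_p_admissible_iff (n : ℕ) (hn : 1 ≤ n) (β : ℝ) (hβ : (n : ℝ) + 1 < β)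
    (p : ℝ) (hp1 : 1 < p) (hp2 : p < 2) :
    (∀ t : ℝ, 0 < t →
      (1 / 8) * ((4 * β - 5) ^ 2 + n - 1) / ((β - 1) * (β - n - 1)) *
          ((2 / p) * (2 / p - 1) * (2 / p - 2) * t ^ (2 / p - 3)) ^ 2 ≤
        ((2 / p) * (2 / p - 1) * (2 / p - 2) * (2 / p - 3) * t ^ (2 / p - 4)) *
          ((2 / p) * (2 / p - 1) * t ^ (2 / p - 2))) ↔
      p ≤ 1 + 4 * (β - 1) * (β - n - 1) /
          (4 * (β - 1) ^ 2 + 4 * (3 * n - 2) * (β - 1) + n) := by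
  have hp0 : 0 < p := lt_trans one_pos hp1
  have hn1 : (1:ℝ) ≤ n := by exact_mod_cast hn
  have hb1 : 0 < β - 1 := by linarith
  have hbn : 0 < β - n - 1 := by linarith
  set K : ℝ := 1 / 8 * ((4 * β - 5) ^ 2 + n - 1) / ((β - 1) * (β - n - 1)) with hKdef
  set a : ℝ := 2 / p with ha
  have ha1 : 1 < a := by rw [ha, lt_div_iff₀ hp0]; linarith
  have ha2 : a < 2 := by rw [ha, div_lt_iff₀ hp0]; nlinarith
  have hD : 0 < 4 * (β - 1) ^ 2 + 4 * (3 * n - 2) * (β - 1) + n := by nlinarith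
  have hE : 0 < (β - 1) * (β - n - 1) := mul_pos hb1 hbn
  -- step 1 : reduce ∀ t to the inequality without t
  have step1 : (∀ t : ℝ, 0 < t →
      K * (a * (a - 1) * (a - 2) * t ^ (a - 3)) ^ 2 ≤
        (a * (a - 1) * (a - 2) * (a - 3) * t ^ (a - 4)) *
          (a * (a - 1) * t ^ (a - 2))) ↔
      K * (a * (a - 1) * (a - 2)) ^ 2 ≤
        (a * (a - 1) * (a - 2) * (a - 3)) * (a * (a - 1)) := by
    constructor
    · intro h
      have := h 1 one_pos
      simpa using this
    · intro h t ht
      have e1 : t ^ (a - 3) * t ^ (a - 3) = t ^ (a - 4) * t ^ (a - 2) := by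
        rw [← Real.rpow_add ht, ← Real.rpow_add ht]; ring_nf
      have hTpos : 0 < t ^ (a - 4) * t ^ (a - 2) :=
        mul_pos (Real.rpow_pos_of_pos ht _) (Real.rpow_pos_of_pos ht _)
      calc K * (a * (a - 1) * (a - 2) * t ^ (a - 3)) ^ 2
          = (K * (a * (a - 1) * (a - 2)) ^ 2) * (t ^ (a - 3) * t ^ (a - 3)) := by ring
        _ = (K * (a * (a - 1) * (a - 2)) ^ 2) * (t ^ (a - 4) * t ^ (a - 2)) := by rw [e1]
        _ ≤ ((a * (a - 1) * (a - 2) * (a - 3)) * (a * (a - 1))) * (t ^ (a - 4) * t ^ (a - 2)) :=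
            mul_le_mul_of_nonneg_right h hTpos.le
        _ = (a * (a - 1) * (a - 2) * (a - 3) * t ^ (a - 4)) * (a * (a - 1) * t ^ (a - 2)) := by
            ring
  rw [step1]
  -- step 2 : reduce to K*(2-a) ≤ 3-a
  have haa : 0 < a * (a - 1) := mul_pos (by linarith) (by linarith)
  have hpos : 0 < (a * (a - 1)) ^ 2 * (2 - a) := mul_pos (pow_pos haa 2) (by linarith)
  have hfac : (a * (a - 1) * (a - 2) * (a - 3)) * (a * (a - 1)) -
      K * (a * (a - 1) * (a - 2)) ^ 2 =
      (a * (a - 1)) ^ 2 * (2 - a) * ((3 - a) - K * (2 - a)) := by ring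
  have step2 : (K * (a * (a - 1) * (a - 2)) ^ 2 ≤
        (a * (a - 1) * (a - 2) * (a - 3)) * (a * (a - 1))) ↔ K * (2 - a) ≤ 3 - a := by
    constructor
    · intro h
      have h0 : 0 ≤ (a * (a - 1)) ^ 2 * (2 - a) * ((3 - a) - K * (2 - a)) := by linarith
      by_contra hcon
      push_neg at hcon
      have h1 : 0 < (a * (a - 1)) ^ 2 * (2 - a) * (K * (2 - a) - (3 - a)) :=
        mul_pos hpos (by linarith)
      nlinarith [h0, h1]
    · intro h
      nlinarith [mul_nonneg hpos.le (show (0:ℝ) ≤ (3 - a) - K * (2 - a) from by linarith)]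
  rw [step2]
  -- step 3 : algebra
  have key : (3 - a) - K * (2 - a) =
      ((3 * p - 2) * (8 * ((β - 1) * (β - n - 1))) -
        ((4 * β - 5) ^ 2 + n - 1) * (2 * p - 2)) / (8 * ((β - 1) * (β - n - 1)) * p) := by
    rw [hKdef, ha]
    field_simp
  have key2 : (1 + 4 * (β - 1) * (β - n - 1) /
      (4 * (β - 1) ^ 2 + 4 * (3 * n - 2) * (β - 1) + n)) - p =
      ((4 * (β - 1) ^ 2 + 4 * (3 * n - 2) * (β - 1) + n) + 4 * (β - 1) * (β - n - 1) -
        p * (4 * (β - 1) ^ 2 + 4 * (3 * n - 2) * (β - 1) + n)) /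
      (4 * (β - 1) ^ 2 + 4 * (3 * n - 2) * (β - 1) + n) := by
    rw [eq_div_iff hD.ne', sub_mul, add_mul, div_mul_cancel₀ _ hD.ne']
    ring
  have hden : 0 < 8 * ((β - 1) * (β - n - 1)) * p := by positivity
  constructor
  · intro h
    rw [← sub_nonneg, key2]
    apply div_nonneg _ hD.le
    have h1 : 0 ≤ (3 - a) - K * (2 - a) := by linarith
    rw [key] at h1
    have h2 := (le_div_iff₀ hden).mp h1
    linarith [h2]
  · intro h
    rw [← sub_nonneg, key2] at h
    have h2 : 0 ≤ (4 * (β - 1) ^ 2 + 4 * (3 * n - 2) * (β - 1) + n) +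
        4 * (β - 1) * (β - n - 1) -
        p * (4 * (β - 1) ^ 2 + 4 * (3 * n - 2) * (β - 1) + n) := by
      have := (le_div_iff₀ hD).mp h
      linarith
    have h3 : 0 ≤ (3 - a) - K * (2 - a) := by
      rw [key]
      apply div_nonneg _ hden.le
      nlinarith [h2]
    linarith
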